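/- Let 𝓜 be a model category and let N be a category carrying two model structures M₁ and M₂ such that: they have the same class of cofibrations; every M₁-weak equivalence is an M₂-weak equivalence; and every M₂-weak equivalence between M₂-fibrant objects is an M₁-weak equivalence. Let G : 𝓜 → N be a functor admitting a left adjoint F : N → 𝓜, and suppose G is right Quillen with respect to M₁ (i.e., G sends fibrations of 𝓜 to M₁-fibrations and trivial fibrations of 𝓜 to M₁-trivial fibrations). Then G is right Quillen with respect to M₂ (i.e., G sends fibrations of 𝓜 to M₂-fibrations and trivial fibrations of 𝓜 to M₂-trivial fibrations) if and only if G sends every fibrant object of 𝓜 to an M₂-fibrant object of N. -/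

import Mathlib

open CategoryTheory Limits

universe v u v' u'

/-- `f` is a retract of `g` in the arrow category: there are morphisms
`i : f → g` and `r : g → f` of arrows with `r ∘ i = id f`. -/
def IsRetractArrow {N : Type u} [Category.{v} N] {X Y X' Y' : N}
    (f : X ⟶ Y) (g : X' ⟶ Y') : Prop :=
  ∃ (i₀ : X ⟶ X') (i₁ : Y ⟶ Y') (r₀ : X' ⟶ X) (r₁ : Y' ⟶ Y),
    i₀ ≫ r₀ = 𝟙 X ∧ i₁ ≫ r₁ = 𝟙 Y ∧ i₀ ≫ g = f ≫ i₁ ∧ r₀ ≫ f = g ≫ r₁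

/-- A (Quillen) model structure on a category `N`: three classes of morphisms
(weak equivalences `W`, cofibrations `Cof`, fibrations `Fib`) satisfying two-out-of-three,
closure under retracts, the lifting axioms and the factorization axioms. -/
structure ModelStructure (N : Type u) [Category.{v} N] where
  W : MorphismProperty N
  Cof : MorphismProperty N
  Fib : MorphismProperty N
  weq_comp : ∀ {X Y Z : N} (f : X ⟶ Y) (g : Y ⟶ Z), W f → W g → W (f ≫ g)
  weq_cancel_left : ∀ {X Y Z : N} (f : X ⟶ Y) (g : Y ⟶ Z), W f → W (f ≫ g) → W g
  weq_cancel_right : ∀ {X Y Z : N} (f : X ⟶ Y) (g : Y ⟶ Z), W g → W (f ≫ g) → W f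
  weq_retract : ∀ {X Y X' Y' : N} (f : X ⟶ Y) (g : X' ⟶ Y'),
    IsRetractArrow f g → W g → W f
  cof_retract : ∀ {X Y X' Y' : N} (f : X ⟶ Y) (g : X' ⟶ Y'),
    IsRetractArrow f g → Cof g → Cof f
  fib_retract : ∀ {X Y X' Y' : N} (f : X ⟶ Y) (g : X' ⟶ Y'),
    IsRetractArrow f g → Fib g → Fib f
  lift_cof_trivFib : ∀ {A B X Y : N} (i : A ⟶ B) (p : X ⟶ Y),
    Cof i → Fib p → W p → HasLiftingProperty i p
  lift_trivCof_fib : ∀ {A B X Y : N} (i : A ⟶ B) (p : X ⟶ Y),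
    Cof i → W i → Fib p → HasLiftingProperty i p
  factor_trivCof_fib : ∀ {X Y : N} (f : X ⟶ Y),
    ∃ (Z : N) (i : X ⟶ Z) (p : Z ⟶ Y), Cof i ∧ W i ∧ Fib p ∧ i ≫ p = f
  factor_cof_trivFib : ∀ {X Y : N} (f : X ⟶ Y),
    ∃ (Z : N) (i : X ⟶ Z) (p : Z ⟶ Y), Cof i ∧ Fib p ∧ W p ∧ i ≫ p = f

/-- An object is fibrant (for a given model structure) if the unique morphism to the
terminal object is a fibration. -/
def ModelStructure.Fibrant {N : Type u} [Category.{v} N] [HasTerminal N]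
    (S : ModelStructure N) (X : N) : Prop :=
  S.Fib (terminal.from X)

namespace ModelStructure

variable {N : Type u} [Category.{v} N]

/-- Identities are weak equivalences. -/
theorem w_id (S : ModelStructure N) (X : N) : S.W (𝟙 X) := by
  obtain ⟨Z, i, p, _, _, wp, hip⟩ := S.factor_cof_trivFib (𝟙 X)
  exact S.weq_retract (𝟙 X) p
    ⟨i, 𝟙 X, p, 𝟙 X, hip, by simp, by simp [hip], by simp⟩ wp

/-- A map with the right lifting property against all trivial cofibrations is a fibration. -/
theorem fib_of_rlp (S : ModelStructure N) {X Y : N} (p : X ⟶ Y)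
    (h : ∀ {A B : N} (i : A ⟶ B), S.Cof i → S.W i → HasLiftingProperty i p) :
    S.Fib p := by
  obtain ⟨Z, i, q, ci, wi, fq, hiq⟩ := S.factor_trivCof_fib p
  letI := h i ci wi
  have sq : CommSq (𝟙 X) i p q := ⟨by simpa using hiq.symm⟩
  exact S.fib_retract p q
    ⟨i, 𝟙 Y, sq.lift, 𝟙 Y, sq.fac_left, by simp, by simp [hiq], by simp [sq.fac_right]⟩ fq

/-- A map with the right lifting property against all cofibrations is a trivial fibration. -/
theorem trivFib_of_rlp (S : ModelStructure N) {X Y : N} (p : X ⟶ Y)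
    (h : ∀ {A B : N} (i : A ⟶ B), S.Cof i → HasLiftingProperty i p) :
    S.Fib p ∧ S.W p := by
  obtain ⟨Z, i, q, ci, fq, wq, hiq⟩ := S.factor_cof_trivFib p
  letI := h i ci
  have sq : CommSq (𝟙 X) i p q := ⟨by simpa using hiq.symm⟩
  have hret : IsRetractArrow p q :=
    ⟨i, 𝟙 Y, sq.lift, 𝟙 Y, sq.fac_left, by simp, by simp [hiq], by simp [sq.fac_right]⟩
  exact ⟨S.fib_retract p q hret fq, S.weq_retract p q hret wq⟩

/-- A map with the left lifting property against all trivial fibrations is a cofibration. -/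
theorem cof_of_llp (S : ModelStructure N) {A B : N} (i : A ⟶ B)
    (h : ∀ {X Y : N} (p : X ⟶ Y), S.Fib p → S.W p → HasLiftingProperty i p) :
    S.Cof i := by
  obtain ⟨Z, c, q, cc, fq, wq, hcq⟩ := S.factor_cof_trivFib i
  letI := h q fq wq
  have sq : CommSq c i q (𝟙 B) := ⟨by simpa using hcq⟩
  exact S.cof_retract i c
    ⟨𝟙 A, sq.lift, 𝟙 A, q, by simp, sq.fac_right, by simp [sq.fac_left], by simp [hcq]⟩ cc

/-- Fibrations are closed under composition. -/
theorem fib_comp (S : ModelStructure N) {X Y Z : N} {p : X ⟶ Y} {q : Y ⟶ Z}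
    (hp : S.Fib p) (hq : S.Fib q) : S.Fib (p ≫ q) :=
  S.fib_of_rlp _ fun i ci wi => by
    letI := S.lift_trivCof_fib i p ci wi hp
    letI := S.lift_trivCof_fib i q ci wi hq
    infer_instance

end ModelStructure

section Star

variable {M : Type u} [Category.{v} M]

open ModelStructure

/-- Lifting against a pullback projection. -/
theorem hasLiftingProperty_pullback_fst {M : Type u} [Category.{v} M]
    {E B Y U V : M} (q : E ⟶ B) (r : Y ⟶ B) [HasPullback r q] (i : U ⟶ V)
    [HasLiftingProperty i q] : HasLiftingProperty i (pullback.fst r q) := by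
  constructor
  intro f g sq
  have w : (f ≫ pullback.snd r q) ≫ q = i ≫ g ≫ r := by
    rw [Category.assoc, ← pullback.condition, ← Category.assoc, sq.w, Category.assoc]
  have sq' : CommSq (f ≫ pullback.snd r q) i q (g ≫ r) := ⟨w⟩
  refine ⟨⟨⟨pullback.lift g sq'.lift (sq'.fac_right).symm, ?_, pullback.lift_fst _ _ _⟩⟩⟩
  apply pullback.hom_ext
  · rw [Category.assoc, pullback.lift_fst, sq.w]
  · rw [Category.assoc, pullback.lift_snd, sq'.fac_left]

/-- **Key lemma.** A cofibration with the left lifting property against all fibrations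
between fibrant objects is a weak equivalence. -/
theorem star [HasTerminal M] [HasFiniteLimits M] (S : ModelStructure M)
    {C D : M} (j : C ⟶ D) (hj : S.Cof j)
    (hlift : ∀ {X Y : M} (p : X ⟶ Y), S.Fib p → S.Fibrant X → S.Fibrant Y →
      HasLiftingProperty j p) :
    S.W j := by
  -- fibrant replacement of D
  obtain ⟨Dh, rD, tD, crD, wrD, ftD, hfD⟩ := S.factor_trivCof_fib (terminal.from D)
  have hDh : S.Fibrant Dh := by
    have : tD = terminal.from Dh := Subsingleton.elim _ _
    rwa [this] at ftD
  -- factor j ≫ rD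
  obtain ⟨Ch, rC, q, crC, wrC, fq, hfac⟩ := S.factor_trivCof_fib (j ≫ rD)
  have hCh : S.Fibrant Ch := by
    have : terminal.from Ch = q ≫ terminal.from Dh := Subsingleton.elim _ _
    rw [Fibrant, this]
    exact S.fib_comp fq hDh
  -- lift j against q
  letI := hlift q fq hCh hDh
  have sqt : CommSq rC j q rD := ⟨hfac⟩
  set t : D ⟶ Ch := sqt.lift with ht
  have ht1 : j ≫ t = rC := sqt.fac_left
  have ht2 : t ≫ q = rD := sqt.fac_right
  -- section of q
  letI := S.lift_trivCof_fib rD q crD wrD fq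
  have sqs : CommSq t rD q (𝟙 Dh) := ⟨by simp [ht2]⟩
  set s : Dh ⟶ Ch := sqs.lift with hs
  have hs1 : rD ≫ s = t := sqs.fac_left
  have hs2 : s ≫ q = 𝟙 Dh := sqs.fac_right
  -- fiberwise path object
  set E2 := pullback q q with hE2
  have hΔw : (𝟙 Ch) ≫ q = (𝟙 Ch) ≫ q := rfl
  set Δ : Ch ⟶ E2 := pullback.lift (𝟙 Ch) (𝟙 Ch) hΔw with hΔ
  obtain ⟨P, σ, π, cσ, wσ, fπ, hσπ⟩ := S.factor_trivCof_fib Δ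
  set d₀ : P ⟶ Ch := π ≫ pullback.fst q q with hd₀
  set d₁ : P ⟶ Ch := π ≫ pullback.snd q q with hd₁
  have hσd₀ : σ ≫ d₀ = 𝟙 Ch := by rw [hd₀, ← Category.assoc, hσπ, hΔ, pullback.lift_fst]
  have hσd₁ : σ ≫ d₁ = 𝟙 Ch := by rw [hd₁, ← Category.assoc, hσπ, hΔ, pullback.lift_snd]
  have fibd₀ : S.Fib d₀ := by
    apply S.fib_of_rlp
    intro A B i ci wi
    letI := S.lift_trivCof_fib i π ci wi fπ
    letI := S.lift_trivCof_fib i q ci wi fq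
    letI : HasLiftingProperty i (pullback.fst q q) :=
      hasLiftingProperty_pullback_fst q q i
    infer_instance
  have wd₀ : S.W d₀ := S.weq_cancel_left σ d₀ wσ (by rw [hσd₀]; exact S.w_id _)
  have hdq : d₀ ≫ q = d₁ ≫ q := by
    rw [hd₀, hd₁, Category.assoc, Category.assoc, pullback.condition]
  -- fiberwise contraction H
  have hkey : rC ≫ (q ≫ s) = rC := by
    rw [← Category.assoc, hfac, Category.assoc, hs1, ht1]
  have hbw : (q ≫ s) ≫ q = (𝟙 Ch) ≫ q := by rw [Category.assoc, hs2]; simp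
  set bot : Ch ⟶ E2 := pullback.lift (q ≫ s) (𝟙 Ch) hbw with hbot
  letI := S.lift_trivCof_fib rC π crC wrC fπ
  have sqH : CommSq (rC ≫ σ) rC π bot := by
    constructor
    rw [Category.assoc, hσπ]
    apply pullback.hom_ext
    · rw [Category.assoc, Category.assoc, hΔ, hbot, pullback.lift_fst, pullback.lift_fst,
        Category.comp_id, hkey]
    · rw [Category.assoc, Category.assoc, hΔ, hbot, pullback.lift_snd, pullback.lift_snd]
  set H : Ch ⟶ P := sqH.lift with hH
  have hH1 : rC ≫ H = rC ≫ σ := sqH.fac_left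
  have hH2 : H ≫ π = bot := sqH.fac_right
  have hHd₀ : H ≫ d₀ = q ≫ s := by rw [hd₀, ← Category.assoc, hH2, hbot, pullback.lift_fst]
  have hHd₁ : H ≫ d₁ = 𝟙 Ch := by rw [hd₁, ← Category.assoc, hH2, hbot, pullback.lift_snd]
  -- q is a trivial fibration (shrinkable fibration)
  have wq : S.W q := by
    refine (S.trivFib_of_rlp q ?_).2
    intro U V c hc
    constructor
    intro u v sq
    letI := S.lift_cof_trivFib c d₀ hc fibd₀ wd₀
    have sq2 : CommSq (u ≫ H) c d₀ (v ≫ s) := by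
      constructor
      rw [Category.assoc, hHd₀, ← Category.assoc, sq.w, Category.assoc]
    refine ⟨⟨⟨sq2.lift ≫ d₁, ?_, ?_⟩⟩⟩
    · rw [← Category.assoc, sq2.fac_left, Category.assoc, hHd₁, Category.comp_id]
    · rw [Category.assoc, ← hdq, ← Category.assoc, sq2.fac_right,
        Category.assoc, hs2, Category.comp_id]
  -- conclude
  have wt : S.W t := S.weq_cancel_right t q wq (by rw [ht2]; exact wrD)
  exact S.weq_cancel_right j t wt (by rw [ht1]; exact wrC)

end Star

section Transfer

variable {N : Type u'} [Category.{v'} N]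

open ModelStructure

/-- An `M₁`-fibration between `M₂`-fibrant objects is an `M₂`-fibration. -/
theorem fib_between_fibrant [HasTerminal N] (M₁ M₂ : ModelStructure N)
    (hcof : M₁.Cof = M₂.Cof)
    (hW21 : ∀ {X Y : N} (f : X ⟶ Y),
      M₂.Fibrant X → M₂.Fibrant Y → M₂.W f → M₁.W f)
    {X Y : N} (p : X ⟶ Y) (f1 : M₁.Fib p) (hX : M₂.Fibrant X) (hY : M₂.Fibrant Y) :
    M₂.Fib p := by
  obtain ⟨E, j, q, cj, wj, fq, hjq⟩ := M₂.factor_trivCof_fib p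
  have hE : M₂.Fibrant E := by
    have : terminal.from E = q ≫ terminal.from Y := Subsingleton.elim _ _
    rw [Fibrant, this]
    exact M₂.fib_comp fq hY
  have wj1 : M₁.W j := hW21 j hX hE wj
  have cj1 : M₁.Cof j := by rw [hcof]; exact cj
  letI := M₁.lift_trivCof_fib j p cj1 wj1 f1
  have sq : CommSq (𝟙 X) j p q := ⟨by simpa using hjq.symm⟩
  exact M₂.fib_retract p q
    ⟨j, 𝟙 Y, sq.lift, 𝟙 Y, sq.fac_left, by simp, by simp [hjq], by simp [sq.fac_right]⟩ fq

end Transfer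

/-- Let `𝓜` be a model category (a bicomplete-enough category with a
model structure `SM`) and let `N` carry two model structures `M₁`, `M₂` with the same
cofibrations, such that every `M₁`-weak equivalence is an `M₂`-weak equivalence and every
`M₂`-weak equivalence between `M₂`-fibrant objects is an `M₁`-weak equivalence.  Let
`G : 𝓜 ⥤ N` be a functor with a left adjoint `F`, and suppose `G` is right Quillen with
respect to `M₁`.  Then `G` is right Quillen with respect to `M₂` if and only if `G` sends
every fibrant object of `𝓜` to an `M₂`-fibrant object of `N`. -/
theorem statement7 {𝓜 : Type u} [Category.{v} 𝓜] [HasTerminal 𝓜]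
    [HasFiniteLimits 𝓜] [HasFiniteColimits 𝓜]
    {N : Type u'} [Category.{v'} N] [HasTerminal N]
    (SM : ModelStructure 𝓜) (M₁ M₂ : ModelStructure N)
    (hcof : M₁.Cof = M₂.Cof)
    (hW12 : ∀ {X Y : N} (f : X ⟶ Y), M₁.W f → M₂.W f)
    (hW21 : ∀ {X Y : N} (f : X ⟶ Y),
      M₂.Fibrant X → M₂.Fibrant Y → M₂.W f → M₁.W f)
    (G : 𝓜 ⥤ N) (F : N ⥤ 𝓜) (adj : F ⊣ G)
    (hGfib : ∀ {X Y : 𝓜} (f : X ⟶ Y), SM.Fib f → M₁.Fib (G.map f))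
    (hGtrivfib : ∀ {X Y : 𝓜} (f : X ⟶ Y),
      SM.Fib f → SM.W f → M₁.Fib (G.map f) ∧ M₁.W (G.map f)) :
    ((∀ {X Y : 𝓜} (f : X ⟶ Y), SM.Fib f → M₂.Fib (G.map f)) ∧
      (∀ {X Y : 𝓜} (f : X ⟶ Y),
        SM.Fib f → SM.W f → M₂.Fib (G.map f) ∧ M₂.W (G.map f)))
    ↔ (∀ X : 𝓜, SM.Fibrant X → M₂.Fibrant (G.obj X)) := by
  constructor
  · -- forward direction
    rintro ⟨h1, _⟩ X hX
    -- `G` preserves the terminal object since it is a right adjoint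
    have hT : IsTerminal (G.obj (⊤_ 𝓜)) :=
      IsTerminal.ofUniqueHom (fun Z => (adj.homEquiv Z (⊤_ 𝓜)) (terminal.from (F.obj Z)))
        (fun Z m => by
          apply (adj.homEquiv Z (⊤_ 𝓜)).symm.injective
          exact Subsingleton.elim _ _)
    have hiso : IsIso (hT.from (⊤_ N) ≫ terminal.from (G.obj (⊤_ 𝓜))) := by
      have : hT.from (⊤_ N) ≫ terminal.from (G.obj (⊤_ 𝓜)) = 𝟙 (⊤_ N) :=
        Subsingleton.elim _ _
      rw [this]; infer_instance
    have hiso2 : IsIso (terminal.from (G.obj (⊤_ 𝓜))) := by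
      have h2 : terminal.from (G.obj (⊤_ 𝓜)) ≫ hT.from (⊤_ N) = 𝟙 (G.obj (⊤_ 𝓜)) :=
        hT.hom_ext _ _
      exact ⟨hT.from (⊤_ N), h2, Subsingleton.elim _ _⟩
    have hfibiso : M₂.Fib (terminal.from (G.obj (⊤_ 𝓜))) := by
      apply M₂.fib_of_rlp
      intro A B i _ _
      infer_instance
    have heq : terminal.from (G.obj X) = G.map (terminal.from X) ≫
        terminal.from (G.obj (⊤_ 𝓜)) := Subsingleton.elim _ _
    rw [ModelStructure.Fibrant, heq]
    exact M₂.fib_comp (h1 (terminal.from X) hX) hfibiso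
  · -- backward direction
    intro hfibrant
    -- trivial fibrations coincide for `M₁` and `M₂`
    have htf : ∀ {X Y : N} (f : X ⟶ Y), M₁.Fib f → M₁.W f → M₂.Fib f ∧ M₂.W f := by
      intro X Y f hf hw
      apply M₂.trivFib_of_rlp
      intro A B i ci
      exact M₁.lift_cof_trivFib i f (by rw [hcof]; exact ci) hf hw
    constructor
    · -- fibration preservation
      intro X Y f hf
      apply M₂.fib_of_rlp
      intro A B i ci wi
      rw [← adj.hasLiftingProperty_iff]
      -- `F.map i` is a cofibration
      have cFi : SM.Cof (F.map i) := by
        apply SM.cof_of_llp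
        intro X' Y' p fp wp
        rw [adj.hasLiftingProperty_iff]
        obtain ⟨fp1, wp1⟩ := hGtrivfib p fp wp
        exact M₁.lift_cof_trivFib i (G.map p) (by rw [hcof]; exact ci) fp1 wp1
      -- `F.map i` is a weak equivalence, by the key lemma
      have wFi : SM.W (F.map i) := by
        apply star SM (F.map i) cFi
        intro X' Y' p fp hX' hY'
        rw [adj.hasLiftingProperty_iff]
        have fp2 : M₂.Fib (G.map p) :=
          fib_between_fibrant M₁ M₂ hcof (fun g => hW21 g) (G.map p) (hGfib p fp)
            (hfibrant X' hX') (hfibrant Y' hY')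
        exact M₂.lift_trivCof_fib i (G.map p) ci wi fp2
      exact SM.lift_trivCof_fib (F.map i) f cFi wFi hf
    · -- trivial fibration preservation
      intro X Y f hf hw
      obtain ⟨f1, w1⟩ := hGtrivfib f hf hw
      exact htf (G.map f) f1 w1
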